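/- For discrete assignments of indivisible objects, agent i's allocation p(i) stochastically dominates allocation q(i) (i.e., for every object o, the number of objects in p(i) weakly preferred to o is at least the number in q(i) weakly preferred to o) if and only if there exists an injection f from q(i) to p(i) such that f(o) is weakly preferred to o for every o in q(i). -/

import Mathlib

/-- SD dominance of discrete allocations is equivalent to the
existence of an injection from q(i) to p(i) mapping each object to a weakly
preferred one (responsive set extension). -/
theorem stmt_0 {O : Type} [Fintype O] [DecidableEq O]
    (r : O → O → Prop) [DecidableRel r]
    (htot : ∀ a b : O, r a b ∨ r b a)
    (htrans : ∀ a b c : O, r a b → r b c → r a c)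
    (S T : Finset O) :
    (∀ o : O, (T.filter (fun o' => r o' o)).card ≤ (S.filter (fun o' => r o' o)).card)
      ↔ ∃ f : O → O, Set.InjOn f ↑T ∧ ∀ o ∈ T, f o ∈ S ∧ r (f o) o := by
  have hrefl : ∀ a, r a a := fun a => (htot a a).elim id id
  constructor
  · intro h
    have hall : ∀ (A : Finset {x // x ∈ T}),
        A.card ≤ (A.biUnion (fun o => S.filter (fun s => r s o.1))).card := by
      intro A
      rcases A.eq_empty_or_nonempty with hA | hA
      · simp [hA]
      · obtain ⟨om, homA, hommax⟩ := A.exists_max_image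
          (fun o => (Finset.univ.filter (fun o' => r o' o.1)).card) hA
        -- every o ∈ A satisfies r o om
        have hworst : ∀ o ∈ A, r o.1 om.1 := by
          intro o hoA
          by_contra hno
          have h1 : r om.1 o.1 := (htot om.1 o.1).resolve_right (by
            intro hro; exact hno hro)
          have hsub : (Finset.univ.filter (fun o' => r o' om.1))
              ⊂ (Finset.univ.filter (fun o' => r o' o.1)) := by
            constructor
            · intro x hx
              simp only [Finset.mem_filter, Finset.mem_univ, true_and] at hx ⊢
              exact htrans x om.1 o.1 hx h1
            · intro hsub'
              have := hsub' (by
                simp only [Finset.mem_filter, Finset.mem_univ, true_and]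
                exact hrefl o.1)
              simp only [Finset.mem_filter, Finset.mem_univ, true_and] at this
              exact hno this
          have := Finset.card_lt_card hsub
          have := hommax o hoA
          omega
        calc A.card = (A.image Subtype.val).card := by
              rw [Finset.card_image_of_injective _ Subtype.val_injective]
          _ ≤ (T.filter (fun o' => r o' om.1)).card := by
              apply Finset.card_le_card
              intro x hx
              simp only [Finset.mem_image] at hx
              obtain ⟨a, haA, rfl⟩ := hx
              exact Finset.mem_filter.mpr ⟨a.2, hworst a haA⟩
          _ ≤ (S.filter (fun o' => r o' om.1)).card := h om.1
          _ ≤ (A.biUnion (fun o => S.filter (fun s => r s o.1))).card := by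
              apply Finset.card_le_card
              intro x hx
              exact Finset.mem_biUnion.mpr ⟨om, homA, hx⟩
    obtain ⟨f, hfinj, hf⟩ :=
      (Finset.all_card_le_biUnion_card_iff_exists_injective
        (fun o : {x // x ∈ T} => S.filter (fun s => r s o.1))).mp hall
    classical
    refine ⟨fun o => if h : o ∈ T then f ⟨o, h⟩ else o, ?_, ?_⟩
    · intro a ha b hb hab
      simp only [Finset.mem_coe] at ha hb
      simp only [dif_pos ha, dif_pos hb] at hab
      exact Subtype.ext_iff.mp (hfinj hab)
    · intro o ho
      simp only [dif_pos ho]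
      have := hf ⟨o, ho⟩
      simp only [Finset.mem_filter] at this
      exact ⟨this.1, this.2⟩
  · rintro ⟨f, hinj, hf⟩ o
    apply Finset.card_le_card_of_injOn f
    · intro x hx
      simp only [Finset.mem_coe, Finset.mem_filter] at hx ⊢
      obtain ⟨hfS, hfr⟩ := hf x hx.1
      exact ⟨hfS, htrans _ _ _ hfr hx.2⟩
    · intro a ha b hb hab
      exact hinj (Finset.mem_coe.mpr (Finset.mem_filter.mp ha).1)
        (Finset.mem_coe.mpr (Finset.mem_filter.mp hb).1) hab
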